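/- InfEx_≅ is strictly contained in InfEx_≈: every family of equivalence structures that is InfEx-learnable up to isomorphism is InfEx-learnable up to bi-embeddability, and there exists a family (namely {[5:ω], [5:ω,2:1]}) that is InfEx-learnable up to bi-embeddability but not up to isomorphism. -/
import Mathlib


open Set

/-- An equivalence structure on ℕ. -/
structure EqStruct where
  rel : ℕ → ℕ → Prop
  equiv : Equivalence rel

namespace EqStruct

/-- Isomorphism of equivalence structures. -/
def Isom (A B : EqStruct) : Prop :=
  ∃ f : ℕ → ℕ, Function.Bijective f ∧ ∀ x y, A.rel x y ↔ B.rel (f x) (f y)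

/-- Embedding of equivalence structures. -/
def Embeds (A B : EqStruct) : Prop :=
  ∃ f : ℕ → ℕ, Function.Injective f ∧ ∀ x y, A.rel x y ↔ B.rel (f x) (f y)

/-- Bi-embeddability. -/
def Biembed (A B : EqStruct) : Prop := A.Embeds B ∧ B.Embeds A

/-- The equivalence class of `x`. -/
def classOf (A : EqStruct) (x : ℕ) : Set ℕ := {y | A.rel x y}

/-- The number of equivalence classes of size `k` (counted in `ℕ∞`). -/
noncomputable def numClasses (A : EqStruct) (k : ℕ∞) : ℕ∞ :=
  {C : Set ℕ | (∃ x, C = A.classOf x) ∧ C.encard = k}.encard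

/-- `A` finitely embeds into `B`: every finite substructure `A[s]` embeds into `B`. -/
def FinEmbeds (A B : EqStruct) : Prop :=
  ∀ s : ℕ, ∃ f : ℕ → ℕ, Set.InjOn f (Set.Iio s) ∧
    ∀ x < s, ∀ y < s, (A.rel x y ↔ B.rel (f x) (f y))

end EqStruct

/-- An informant for a structure: lists every pair, labelled correctly. -/
def IsInformant (A : EqStruct) (I : ℕ → (ℕ × ℕ) × Bool) : Prop :=
  (∀ p : ℕ × ℕ, ∃ n, (I n).1 = p) ∧
  (∀ n, ((I n).2 = true ↔ A.rel (I n).1.1 (I n).1.2))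

/-- A learner from informants: `none` is the `?` symbol. -/
abbrev Learner := List ((ℕ × ℕ) × Bool) → Option ℕ

/-- The initial segment `I[n]`. -/
def seg (I : ℕ → (ℕ × ℕ) × Bool) (n : ℕ) : List ((ℕ × ℕ) × Bool) :=
  (List.range n).map I

/-- `M` InfEx-learns `A` up to `sim`, with hypotheses indices into `Me`. -/
def InfExLearns (Me : ℕ → EqStruct) (sim : EqStruct → EqStruct → Prop)
    (M : Learner) (A : EqStruct) : Prop :=
  ∀ B, B.Isom A → ∀ I, IsInformant B I →
    ∃ e, sim (Me e) B ∧ ∃ N, ∀ n ≥ N, M (seg I n) = some e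

/-- `M` finitely learns `A` from informants up to `sim`. -/
def InfFinLearns (Me : ℕ → EqStruct) (sim : EqStruct → EqStruct → Prop)
    (M : Learner) (A : EqStruct) : Prop :=
  ∀ B, B.Isom A → ∀ I, IsInformant B I →
    ∃ e, sim (Me e) B ∧ (∃ n, M (seg I n) = some e) ∧
      ∀ n e', M (seg I n) = some e' → e' = e

/-- A text for a structure: enumerates exactly the related pairs (`none` is pause). -/
def IsText (A : EqStruct) (T : ℕ → Option (ℕ × ℕ)) : Prop :=
  ∀ x y, A.rel x y ↔ ∃ n, T n = some (x, y)

/-- A learner from texts. -/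
abbrev TxtLearner := List (Option (ℕ × ℕ)) → Option ℕ

/-- The initial segment `T[n]` of a text. -/
def tseg (T : ℕ → Option (ℕ × ℕ)) (n : ℕ) : List (Option (ℕ × ℕ)) :=
  (List.range n).map T

/-- `M` TxtEx-learns `A` up to `sim`. -/
def TxtExLearns (Me : ℕ → EqStruct) (sim : EqStruct → EqStruct → Prop)
    (M : TxtLearner) (A : EqStruct) : Prop :=
  ∀ B, B.Isom A → ∀ T, IsText B T →
    ∃ e, sim (Me e) B ∧ ∃ N, ∀ n ≥ N, M (tseg T n) = some e

/-- `σ` describes a finite part of `A`: it is an initial segment of an informant for `A`. -/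
def DescribesPart (A : EqStruct) (σ : List ((ℕ × ℕ) × Bool)) : Prop :=
  ∃ I, IsInformant A I ∧ σ = seg I σ.length

open EqStruct Set

namespace Stmt10Aux

open scoped Classical

lemma isom_symm {A B : EqStruct} (h : A.Isom B) : B.Isom A := by
  obtain ⟨f, hf, hrel⟩ := h
  obtain ⟨g, hgf, hfg⟩ := Function.bijective_iff_has_inverse.mp hf
  exact ⟨g, Function.bijective_iff_has_inverse.mpr ⟨f, hfg, hgf⟩,
    fun x y => by rw [hrel (g x) (g y), hfg x, hfg y]⟩

lemma isom_trans {A B C : EqStruct} (h : A.Isom B) (h' : B.Isom C) : A.Isom C := by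
  obtain ⟨f, hf, hrel⟩ := h; obtain ⟨g, hg, hrel'⟩ := h'
  exact ⟨g ∘ f, hg.comp hf, fun x y => (hrel x y).trans (hrel' (f x) (f y))⟩

lemma isom_embeds {A B : EqStruct} (h : A.Isom B) : A.Embeds B := by
  obtain ⟨f, hf, hrel⟩ := h; exact ⟨f, hf.injective, hrel⟩

lemma embeds_trans {A B C : EqStruct} (h : A.Embeds B) (h' : B.Embeds C) : A.Embeds C := by
  obtain ⟨f, hf, hrel⟩ := h; obtain ⟨g, hg, hrel'⟩ := h'
  exact ⟨g ∘ f, hg.comp hf, fun x y => (hrel x y).trans (hrel' (f x) (f y))⟩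

/-- canonical copy of `[5:ω]` -/
def E5 : EqStruct := ⟨fun x y => x / 5 = y / 5, ⟨fun _ => rfl, Eq.symm, Eq.trans⟩⟩

/-- canonical copy of `[5:ω,2:1]` -/
def FB : EqStruct :=
  ⟨fun x y => (x < 2 ∧ y < 2) ∨ (2 ≤ x ∧ 2 ≤ y ∧ (x-2)/5 = (y-2)/5), by
    constructor <;> intros <;> omega⟩

section rank

lemma rank_inj {s : Set ℕ} (hs : s.Finite) {x y : ℕ} (hx : x ∈ s) (hy : y ∈ s)
    (h : (s ∩ Set.Iio x).ncard = (s ∩ Set.Iio y).ncard) : x = y := by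
  rcases lt_trichotomy x y with hlt | he | hlt
  · exfalso
    have hss : s ∩ Set.Iio x ⊂ s ∩ Set.Iio y := by
      constructor
      · exact Set.inter_subset_inter_right s (fun z hz => lt_trans hz hlt)
      · intro hsub
        have : x ∈ s ∩ Set.Iio x := hsub ⟨hx, hlt⟩
        exact absurd this.2 (lt_irrefl x)
    have := Set.ncard_lt_ncard hss (hs.inter_of_left _)
    omega
  · exact he
  · exfalso
    have hss : s ∩ Set.Iio y ⊂ s ∩ Set.Iio x := by
      constructor
      · exact Set.inter_subset_inter_right s (fun z hz => lt_trans hz hlt)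
      · intro hsub
        have : y ∈ s ∩ Set.Iio y := hsub ⟨hy, hlt⟩
        exact absurd this.2 (lt_irrefl y)
    have := Set.ncard_lt_ncard hss (hs.inter_of_left _)
    omega

lemma rank_lt {s : Set ℕ} (hs : s.Finite) {x : ℕ} (hx : x ∈ s) :
    (s ∩ Set.Iio x).ncard < s.ncard := by
  refine Set.ncard_lt_ncard ⟨Set.inter_subset_left, fun hsub => ?_⟩ hs
  exact absurd (hsub hx).2 (lt_irrefl x)

lemma rank_exists (s : Set ℕ) (hs : s.Finite) :
    ∀ r, r < s.ncard → ∃ x ∈ s, (s ∩ Set.Iio x).ncard = r := by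
  intro r
  induction r with
  | zero =>
    intro hr
    have hne : s.Nonempty := Set.nonempty_of_ncard_ne_zero (by omega)
    refine ⟨sInf s, Nat.sInf_mem hne, ?_⟩
    have : s ∩ Set.Iio (sInf s) = ∅ := by
      ext z; simp only [Set.mem_inter_iff, Set.mem_Iio, Set.mem_empty_iff_false, iff_false]
      rintro ⟨hz, hlt⟩; exact absurd (Nat.sInf_le hz) (by omega)
    rw [this]; exact Set.ncard_empty _
  | succ r ih =>
    intro hr
    obtain ⟨x, hx, hxr⟩ := ih (by omega)
    have hne : (s ∩ Set.Ioi x).Nonempty := by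
      rw [Set.nonempty_iff_ne_empty]
      intro hemp
      have hsub : s ⊆ (s ∩ Set.Iio x) ∪ {x} := by
        intro z hz
        rcases lt_trichotomy z x with h1 | h1 | h1
        · exact Or.inl ⟨hz, h1⟩
        · exact Or.inr (by simp [h1])
        · exact absurd (Set.eq_empty_iff_forall_notMem.mp hemp z) (by simp [hz, h1])
      have hle := Set.ncard_le_ncard hsub (((hs.inter_of_left _).union (Set.finite_singleton x)))
      have hun := Set.ncard_union_le (s ∩ Set.Iio x) ({x} : Set ℕ)
      have h1 : ({x} : Set ℕ).ncard = 1 := Set.ncard_singleton x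
      omega
    set x' := sInf (s ∩ Set.Ioi x) with hx'
    have hx'mem : x' ∈ s ∩ Set.Ioi x := Nat.sInf_mem hne
    refine ⟨x', hx'mem.1, ?_⟩
    have hset : s ∩ Set.Iio x' = insert x (s ∩ Set.Iio x) := by
      ext z
      simp only [Set.mem_inter_iff, Set.mem_Iio, Set.mem_insert_iff]
      constructor
      · rintro ⟨hz, hlt⟩
        rcases lt_trichotomy z x with h1 | h1 | h1
        · exact Or.inr ⟨hz, h1⟩
        · exact Or.inl h1
        · exact absurd (Nat.sInf_le (show z ∈ s ∩ Set.Ioi x from ⟨hz, h1⟩)) (by rw [← hx']; omega)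
      · rintro (rfl | ⟨hz, hlt⟩)
        · exact ⟨hx, hx'mem.2⟩
        · exact ⟨hz, lt_trans hlt hx'mem.2⟩
    rw [hset, Set.ncard_insert_of_notMem (by simp) (hs.inter_of_left _), hxr]

end rank

section classification

variable (X : EqStruct)

noncomputable def mrep (x : ℕ) : ℕ := sInf (X.classOf x)

lemma classOf_nonempty (x : ℕ) : (X.classOf x).Nonempty := ⟨x, X.equiv.refl x⟩

lemma rel_mrep (x : ℕ) : X.rel x (mrep X x) := Nat.sInf_mem (classOf_nonempty X x)

lemma classOf_eq_of_rel {x y : ℕ} (h : X.rel x y) : X.classOf x = X.classOf y :=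
  Set.ext fun z => ⟨fun hz => X.equiv.trans (X.equiv.symm h) hz, fun hz => X.equiv.trans h hz⟩

lemma mrep_eq_of_rel {x y : ℕ} (h : X.rel x y) : mrep X x = mrep X y := by
  unfold mrep; rw [classOf_eq_of_rel X h]

lemma rel_of_mrep_eq {x y : ℕ} (h : mrep X x = mrep X y) : X.rel x y :=
  X.equiv.trans (rel_mrep X x) (h ▸ X.equiv.symm (rel_mrep X y))

lemma mrep_mrep (x : ℕ) : mrep X (mrep X x) = mrep X x :=
  (mrep_eq_of_rel X (rel_mrep X x)).symm

lemma mem_classOf_iff {x y : ℕ} : y ∈ X.classOf x ↔ X.rel x y := Iff.rfl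

/-- minimal representatives form an infinite set, if all classes are finite -/
lemma reps_infinite (hfin : ∀ x, (X.classOf x).Finite) :
    {z : ℕ | mrep X z = z}.Infinite := by
  by_contra hf
  rw [Set.not_infinite] at hf
  have : (Set.univ : Set ℕ) ⊆ ⋃ z ∈ {z : ℕ | mrep X z = z}, X.classOf z := by
    intro x _
    refine Set.mem_biUnion (mrep_mrep X x) ?_
    exact X.equiv.symm (rel_mrep X x)
  exact Set.infinite_univ ((hf.biUnion fun z _ => hfin z).subset this)

noncomputable def rnk (x : ℕ) : ℕ := (X.classOf x ∩ Set.Iio x).ncard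

lemma isom_E5 (h : ∀ x, (X.classOf x).encard = 5) : X.Isom E5 := by
  have hfin : ∀ x, (X.classOf x).Finite := fun x =>
    (X.classOf x).finite_of_encard_eq_coe (by exact_mod_cast h x)
  have hnc : ∀ x, (X.classOf x).ncard = 5 := fun x => by rw [Set.ncard_def, h x]; rfl
  set P : ℕ → Prop := fun z => mrep X z = z with hP
  have hPinf : (setOf P).Infinite := reps_infinite X hfin
  set φ : ℕ → ℕ := fun x => 5 * Nat.count P (mrep X x) + rnk X x with hφ
  have hrnk : ∀ x, rnk X x < 5 := fun x => (hnc x) ▸ rank_lt (hfin x) (X.equiv.refl x)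
  have hcnt_inj : ∀ x y : ℕ, Nat.count P (mrep X x) = Nat.count P (mrep X y) → mrep X x = mrep X y := by
    intro x y hxy
    have h1 := Nat.nth_count (p := P) (mrep_mrep X x)
    have h2 := Nat.nth_count (p := P) (mrep_mrep X y)
    rw [← h1, ← h2, hxy]
  have hiff : ∀ x y, X.rel x y ↔ E5.rel (φ x) (φ y) := by
    intro x y
    show X.rel x y ↔ (5 * Nat.count P (mrep X x) + rnk X x) / 5 = (5 * Nat.count P (mrep X y) + rnk X y) / 5
    have hx := hrnk x; have hy := hrnk y
    constructor
    · intro hr; rw [mrep_eq_of_rel X hr] at *; omega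
    · intro hq
      have : Nat.count P (mrep X x) = Nat.count P (mrep X y) := by omega
      exact rel_of_mrep_eq X (hcnt_inj x y this)
  refine ⟨φ, ⟨?_, ?_⟩, hiff⟩
  · -- injective
    intro x y hxy
    have hx := hrnk x; have hy := hrnk y
    have hc : Nat.count P (mrep X x) = Nat.count P (mrep X y) := by
      simp only [hφ] at hxy; omega
    have hrel : X.rel x y := rel_of_mrep_eq X (hcnt_inj x y hc)
    have hr : rnk X x = rnk X y := by simp only [hφ] at hxy; omega
    have hcls : X.classOf x = X.classOf y := classOf_eq_of_rel X hrel
    refine rank_inj (hfin x) (X.equiv.refl x) ?_ ?_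
    · rw [hcls]; exact X.equiv.refl y
    · unfold rnk at hr; rw [hcls] at hr ⊢; exact hr
  · -- surjective
    intro n
    set q := n / 5 with hq
    set r := n % 5 with hr
    set z := Nat.nth P q with hz
    have hPz : P z := Nat.nth_mem_of_infinite hPinf q
    have hcz : Nat.count P z = q := Nat.count_nth_of_infinite hPinf q
    obtain ⟨x, hxmem, hxr⟩ := rank_exists (X.classOf z) (hfin z) r (by rw [hnc]; omega)
    have hrelzx : X.rel z x := hxmem
    have hmx : mrep X x = z := by rw [← mrep_eq_of_rel X hrelzx]; exact hPz
    refine ⟨x, ?_⟩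
    have hrx : rnk X x = r := by
      unfold rnk; rw [← classOf_eq_of_rel X hrelzx]; exact hxr
    show 5 * Nat.count P (mrep X x) + rnk X x = n
    rw [hmx, hcz, hrx]; omega

lemma isom_FB (h : ∃ a, (X.classOf a).encard = 2 ∧ ∀ x, ¬ X.rel x a → (X.classOf x).encard = 5) :
    X.Isom FB := by
  obtain ⟨a, h2, h5⟩ := h
  have hclsa : ∀ x, X.rel x a → X.classOf x = X.classOf a := fun x hx => classOf_eq_of_rel X hx
  have hfin : ∀ x, (X.classOf x).Finite := by
    intro x
    by_cases hx : X.rel x a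
    · rw [hclsa x hx]; exact (X.classOf a).finite_of_encard_eq_coe (by exact_mod_cast h2)
    · exact (X.classOf x).finite_of_encard_eq_coe (by exact_mod_cast h5 x hx)
  have hnc2 : ∀ x, X.rel x a → (X.classOf x).ncard = 2 := fun x hx => by
    rw [hclsa x hx, Set.ncard_def, h2]; rfl
  have hnc5 : ∀ x, ¬ X.rel x a → (X.classOf x).ncard = 5 := fun x hx => by
    rw [Set.ncard_def, h5 x hx]; rfl
  set P : ℕ → Prop := fun z => mrep X z = z ∧ ¬ X.rel z a with hP
  have hPinf : (setOf P).Infinite := by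
    by_contra hf
    rw [Set.not_infinite] at hf
    have hsub : (Set.univ : Set ℕ) ⊆ X.classOf a ∪ ⋃ z ∈ setOf P, X.classOf z := by
      intro x _
      by_cases hx : X.rel x a
      · exact Or.inl (X.equiv.symm hx)
      · refine Or.inr (Set.mem_biUnion (⟨mrep_mrep X x, fun hc => hx ?_⟩ : P (mrep X x)) ?_)
        · exact X.equiv.trans (rel_mrep X x) hc
        · exact X.equiv.symm (rel_mrep X x)
    exact Set.infinite_univ (((hfin a).union (hf.biUnion fun z _ => hfin z)).subset hsub)
  set φ : ℕ → ℕ := fun x => if X.rel x a then rnk X x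
    else 2 + 5 * Nat.count P (mrep X x) + rnk X x with hφ
  have hrnk2 : ∀ x, X.rel x a → rnk X x < 2 := fun x hx =>
    (hnc2 x hx) ▸ rank_lt (hfin x) (X.equiv.refl x)
  have hrnk5 : ∀ x, ¬ X.rel x a → rnk X x < 5 := fun x hx =>
    (hnc5 x hx) ▸ rank_lt (hfin x) (X.equiv.refl x)
  have hmrep_na : ∀ x, ¬ X.rel x a → ¬ X.rel (mrep X x) a := by
    intro x hx hc; exact hx (X.equiv.trans (rel_mrep X x) hc)
  have hcnt_inj : ∀ x y : ℕ, ¬ X.rel x a → ¬ X.rel y a →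
      Nat.count P (mrep X x) = Nat.count P (mrep X y) → mrep X x = mrep X y := by
    intro x y hx hy hxy
    have h1 := Nat.nth_count (p := P) ⟨mrep_mrep X x, hmrep_na x hx⟩
    have h2 := Nat.nth_count (p := P) ⟨mrep_mrep X y, hmrep_na y hy⟩
    rw [← h1, ← h2, hxy]
  have hiff : ∀ x y, X.rel x y ↔ FB.rel (φ x) (φ y) := by
    intro x y
    show X.rel x y ↔ (φ x < 2 ∧ φ y < 2) ∨ (2 ≤ φ x ∧ 2 ≤ φ y ∧ (φ x - 2)/5 = (φ y - 2)/5)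
    by_cases hx : X.rel x a <;> by_cases hy : X.rel y a
    · have := hrnk2 x hx; have := hrnk2 y hy
      simp only [hφ, if_pos hx, if_pos hy]
      constructor
      · intro _; left; omega
      · intro _; exact X.equiv.trans hx (X.equiv.symm hy)
    · have := hrnk2 x hx; have := hrnk5 y hy
      simp only [hφ, if_pos hx, if_neg hy]
      constructor
      · intro hr; exact absurd (X.equiv.trans (X.equiv.symm hr) hx) hy
      · intro hr; omega
    · have := hrnk5 x hx; have := hrnk2 y hy
      simp only [hφ, if_neg hx, if_pos hy]
      constructor
      · intro hr; exact absurd (X.equiv.trans hr hy) hx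
      · intro hr; omega
    · have h5x := hrnk5 x hx; have h5y := hrnk5 y hy
      simp only [hφ, if_neg hx, if_neg hy]
      constructor
      · intro hr
        rw [mrep_eq_of_rel X hr]
        right; omega
      · intro hr
        have hc : Nat.count P (mrep X x) = Nat.count P (mrep X y) := by omega
        exact rel_of_mrep_eq X (hcnt_inj x y hx hy hc)
  refine ⟨φ, ⟨?_, ?_⟩, hiff⟩
  · intro x y hxy
    by_cases hx : X.rel x a <;> by_cases hy : X.rel y a
    · have := hrnk2 x hx; have := hrnk2 y hy
      simp only [hφ, if_pos hx, if_pos hy] at hxy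
      have hcls : X.classOf x = X.classOf y := by
        rw [hclsa x hx, hclsa y hy]
      refine rank_inj (hfin x) (X.equiv.refl x) (hcls ▸ X.equiv.refl y) ?_
      unfold rnk at hxy; rw [hcls] at hxy ⊢; exact hxy
    · have := hrnk2 x hx; have := hrnk5 y hy
      simp only [hφ, if_pos hx, if_neg hy] at hxy; omega
    · have := hrnk5 x hx; have := hrnk2 y hy
      simp only [hφ, if_neg hx, if_pos hy] at hxy; omega
    · have := hrnk5 x hx; have := hrnk5 y hy
      simp only [hφ, if_neg hx, if_neg hy] at hxy
      have hc : Nat.count P (mrep X x) = Nat.count P (mrep X y) := by omega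
      have hrel : X.rel x y := rel_of_mrep_eq X (hcnt_inj x y hx hy hc)
      have hcls : X.classOf x = X.classOf y := classOf_eq_of_rel X hrel
      refine rank_inj (hfin x) (X.equiv.refl x) (hcls ▸ X.equiv.refl y) ?_
      have hr : rnk X x = rnk X y := by omega
      unfold rnk at hr; rw [hcls] at hr ⊢; exact hr
  · intro n
    by_cases hn : n < 2
    · obtain ⟨x, hxmem, hxr⟩ := rank_exists (X.classOf a) (hfin a)
        n (by rw [hnc2 a (X.equiv.refl a)]; omega)
      have hrel : X.rel x a := X.equiv.symm hxmem
      refine ⟨x, ?_⟩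
      show φ x = n
      rw [hφ]; simp only [if_pos hrel]
      unfold rnk; rw [hclsa x hrel]; exact hxr
    · set q := (n - 2) / 5 with hq
      set r := (n - 2) % 5 with hr
      set z := Nat.nth P q with hz
      have hPz : P z := Nat.nth_mem_of_infinite hPinf q
      have hcz : Nat.count P z = q := Nat.count_nth_of_infinite hPinf q
      obtain ⟨x, hxmem, hxr⟩ := rank_exists (X.classOf z) (hfin z) r
        (by rw [hnc5 z hPz.2]; omega)
      have hrelzx : X.rel z x := hxmem
      have hxa : ¬ X.rel x a := fun hc => hPz.2 (X.equiv.trans hrelzx hc)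
      have hmx : mrep X x = z := by rw [← mrep_eq_of_rel X hrelzx]; exact hPz.1
      refine ⟨x, ?_⟩
      show φ x = n
      rw [hφ]; simp only [if_neg hxa]
      have hrx : rnk X x = r := by
        unfold rnk; rw [← classOf_eq_of_rel X hrelzx]; exact hxr
      rw [hmx, hcz, hrx]; omega

end classification

end Stmt10Aux

namespace Stmt10Aux

lemma emb_E5_FB : E5.Embeds FB := by
  refine ⟨fun x => x + 7, fun x y h => by simp only at h; omega, fun x y => ?_⟩
  show x / 5 = y / 5 ↔ (x + 7 < 2 ∧ y + 7 < 2) ∨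
    (2 ≤ x + 7 ∧ 2 ≤ y + 7 ∧ (x + 7 - 2)/5 = (y + 7 - 2)/5)
  omega

lemma emb_FB_E5 : FB.Embeds E5 := by
  refine ⟨fun x => if x < 2 then x else x + 3, fun x y h => by
    simp only at h; split_ifs at h <;> omega, fun x y => ?_⟩
  show (x < 2 ∧ y < 2) ∨ (2 ≤ x ∧ 2 ≤ y ∧ (x-2)/5 = (y-2)/5) ↔
    (if x < 2 then x else x + 3) / 5 = (if y < 2 then y else y + 3) / 5
  split_ifs <;> omega

/-- no structure with all classes of size 5 is isomorphic to one with a class of size 2 -/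
lemma not_isom_AB {A B : EqStruct} (hA : ∀ x, (A.classOf x).encard = 5)
    (hB : ∃ a, (B.classOf a).encard = 2 ∧ ∀ x, ¬ B.rel x a → (B.classOf x).encard = 5) :
    ¬ A.Isom B := by
  rintro ⟨f, hf, hrel⟩
  obtain ⟨a, h2, _⟩ := hB
  obtain ⟨x₀, rfl⟩ := hf.surjective a
  have himg : f '' A.classOf x₀ = B.classOf (f x₀) := by
    ext z
    constructor
    · rintro ⟨y, hy, rfl⟩; exact (hrel x₀ y).mp hy
    · intro hz
      obtain ⟨y, rfl⟩ := hf.surjective z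
      exact ⟨y, (hrel x₀ y).mpr hz, rfl⟩
  have := (hf.injective.injOn (s := A.classOf x₀)).encard_image
  rw [himg, h2, hA x₀] at this
  exact absurd this (by decide)

/-- the structure associated with a colouring -/
def CS (c : ℕ → ℕ) : EqStruct := ⟨fun x y => c x = c y, ⟨fun _ => rfl, Eq.symm, Eq.trans⟩⟩

/-- the canonical informant of a colouring structure -/
def pinf (c : ℕ → ℕ) : ℕ → (ℕ × ℕ) × Bool := fun n =>
  (Nat.unpair n, decide (c (Nat.unpair n).1 = c (Nat.unpair n).2))

lemma pinf_informant (c : ℕ → ℕ) : IsInformant (CS c) (pinf c) := by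
  constructor
  · intro p; exact ⟨Nat.pair p.1 p.2, by simp [pinf]⟩
  · intro n; simp [pinf, CS]

lemma seg_congr {c c' : ℕ → ℕ} (n : ℕ) (h : ∀ x < n, c x = c' x) :
    seg (pinf c) n = seg (pinf c') n := by
  unfold seg
  refine List.map_congr_left fun i hi => ?_
  rw [List.mem_range] at hi
  have h1 : (Nat.unpair i).1 < n := lt_of_le_of_lt (Nat.unpair_left_le i) hi
  have h2 : (Nat.unpair i).2 < n := lt_of_le_of_lt (Nat.unpair_right_le i) hi
  unfold pinf
  rw [h _ h1, h _ h2]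

lemma encard_Ico (a b : ℕ) : (Set.Ico a b).encard = (b - a : ℕ) := by
  rw [← Finset.coe_Ico, Set.encard_coe_eq_coe_finsetCard, Nat.card_Ico]

/-- invariant of an A-stage colouring with boundary `m` -/
def Inv (c : ℕ → ℕ) (m : ℕ) : Prop :=
  (∀ x, x < m → c x < m) ∧
  (∀ x, x < m → ({y | c y = c x} : Set ℕ).encard = 5) ∧
  (∀ x, m ≤ x → c x = m + 5 * ((x - m) / 5))

/-- invariant of a B-stage colouring with 2-class `{m, m+1}` -/
def BInv (c : ℕ → ℕ) (m : ℕ) : Prop :=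
  (∀ x, x < m → c x < m) ∧
  (∀ y, c y = m ↔ (y = m ∨ y = m + 1)) ∧
  (∀ x, x < m → ({y | c y = c x} : Set ℕ).encard = 5) ∧
  (∀ x, m + 2 ≤ x → c x = (m + 2) + 5 * ((x - (m + 2)) / 5))

lemma tail_fiber (c : ℕ → ℕ) (m : ℕ) (hlab : ∀ x, x < m → c x < m)
    (htail : ∀ x, m ≤ x → c x = m + 5 * ((x - m) / 5)) {x : ℕ} (hx : m ≤ x) :
    ({y | c y = c x} : Set ℕ).encard = 5 := by
  set k := (x - m) / 5 with hk
  have hset : {y | c y = c x} = Set.Ico (m + 5 * k) (m + 5 * k + 5) := by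
    ext y
    simp only [Set.mem_setOf_eq, Set.mem_Ico]
    rcases lt_or_ge y m with hy | hy
    · have := hlab y hy
      rw [htail x hx]
      constructor
      · intro h; omega
      · intro h; omega
    · rw [htail y hy, htail x hx]
      omega
  rw [hset, encard_Ico]
  norm_num

lemma inv_shape {c : ℕ → ℕ} {m : ℕ} (h : Inv c m) :
    ∀ x, ((CS c).classOf x).encard = 5 := by
  obtain ⟨hlab, hfib, htail⟩ := h
  intro x
  have hcls : (CS c).classOf x = {y | c y = c x} := by
    ext y; simp only [EqStruct.classOf, CS, Set.mem_setOf_eq]; exact eq_comm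
  rw [hcls]
  rcases lt_or_ge x m with hx | hx
  · exact hfib x hx
  · exact tail_fiber c m hlab htail hx

lemma binv_shape {c : ℕ → ℕ} {m : ℕ} (h : BInv c m) :
    ∃ a, ((CS c).classOf a).encard = 2 ∧
      ∀ x, ¬ (CS c).rel x a → ((CS c).classOf x).encard = 5 := by
  obtain ⟨hlab, h2, hfib, htail⟩ := h
  have hcls : ∀ x, (CS c).classOf x = {y | c y = c x} := by
    intro x; ext y; simp only [EqStruct.classOf, CS, Set.mem_setOf_eq]; exact eq_comm
  refine ⟨m, ?_, ?_⟩
  · rw [hcls]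
    have hcm : c m = m := (h2 m).mpr (Or.inl rfl)
    have : {y | c y = c m} = {m, m + 1} := by
      ext y; simp only [Set.mem_setOf_eq, hcm, Set.mem_insert_iff, Set.mem_singleton_iff]
      exact h2 y
    rw [this, Set.encard_pair (by omega)]
  · intro x hx
    have hxm : c x ≠ c m := hx
    have hcm : c m = m := (h2 m).mpr (Or.inl rfl)
    rw [hcls]
    rcases lt_or_ge x m with h1 | h1
    · exact hfib x h1
    · rcases lt_or_ge x (m + 2) with h3 | h3
      · exfalso
        have : x = m ∨ x = m + 1 := by omega
        rcases this with rfl | rfl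
        · exact hxm rfl
        · exact hxm (by rw [hcm, (h2 (m+1)).mpr (Or.inr rfl)])
      · -- tail block
        set k := (x - (m + 2)) / 5 with hk
        have hset : {y | c y = c x} = Set.Ico ((m+2) + 5 * k) ((m+2) + 5 * k + 5) := by
          ext y
          simp only [Set.mem_setOf_eq, Set.mem_Ico]
          rcases lt_or_ge y m with hy | hy
          · have := hlab y hy
            rw [htail x h3]
            constructor <;> (intro h; omega)
          · rcases lt_or_ge y (m+2) with hy2 | hy2
            · have hcy : c y = m := (h2 y).mpr (by omega)
              rw [htail x h3, hcy]
              constructor <;> (intro h; omega)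
            · rw [htail y hy2, htail x h3]
              omega
        rw [hset, encard_Ico]
        norm_num

end Stmt10Aux

namespace Stmt10Aux

def Bify (c : ℕ → ℕ) (m' : ℕ) : ℕ → ℕ := fun x =>
  if x < m' then c x else if x < m' + 2 then m' else (m' + 2) + 5 * ((x - (m' + 2)) / 5)

def Aify (c : ℕ → ℕ) (p m'' : ℕ) : ℕ → ℕ := fun x =>
  if x < m'' then c x else if x < m'' + 3 then p else (m'' + 3) + 5 * ((x - (m'' + 3)) / 5)

lemma Bify_spec {c : ℕ → ℕ} {m : ℕ} (h : Inv c m) {m' : ℕ} (h1 : m ≤ m')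
    (h2 : m' % 5 = m % 5) :
    (∀ x, x < m' → Bify c m' x = c x) ∧ BInv (Bify c m') m' ∧
      (∀ y, m ≤ y → m ≤ Bify c m' y) := by
  obtain ⟨hlab, hfib, htail⟩ := h
  have hagree : ∀ x, x < m' → Bify c m' x = c x := fun x hx => if_pos hx
  have hlab' : ∀ x, x < m' → c x < m' := by
    intro x hx
    rcases lt_or_ge x m with h3 | h3
    · exact lt_of_lt_of_le (hlab x h3) h1
    · rw [htail x h3]; omega
  have hge : ∀ y, m' ≤ y → m' ≤ Bify c m' y := by
    intro y hy
    unfold Bify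
    rw [if_neg (by omega)]
    split_ifs <;> omega
  refine ⟨hagree, ⟨?_, ?_, ?_, ?_⟩, ?_⟩
  · intro x hx; rw [hagree x hx]; exact hlab' x hx
  · intro y
    rcases lt_or_ge y m' with hy | hy
    · rw [hagree y hy]
      have := hlab' y hy
      constructor
      · intro h; omega
      · intro h; omega
    · unfold Bify
      rw [if_neg (by omega)]
      split_ifs <;> omega
  · intro x hx
    rw [hagree x hx]
    have hset : {y | Bify c m' y = c x} = {y | c y = c x} := by
      ext y
      simp only [Set.mem_setOf_eq]
      rcases lt_or_ge y m' with hy | hy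
      · rw [hagree y hy]
      · have hcx := hlab' x hx
        have h3 : m' ≤ Bify c m' y := hge y hy
        have h4 : m ≤ y := le_trans h1 hy
        rw [htail y h4]
        constructor
        · intro h; omega
        · intro h; omega
    rw [hset]
    rcases lt_or_ge x m with h3 | h3
    · exact hfib x h3
    · exact tail_fiber c m hlab htail h3
  · intro x hx
    unfold Bify
    rw [if_neg (by omega), if_neg (by omega)]
  · intro y hy
    rcases lt_or_ge y m' with h3 | h3
    · rw [hagree y h3]
      rw [htail y hy]; omega
    · have := hge y h3; omega

lemma Aify_spec {c : ℕ → ℕ} {m' : ℕ} (h : BInv c m') {m'' : ℕ} (h1 : m' + 2 ≤ m'')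
    (h2 : m'' % 5 = (m' + 2) % 5) :
    (∀ x, x < m'' → Aify c m' m'' x = c x) ∧ Inv (Aify c m' m'') (m'' + 3) ∧
      (∀ y, m' ≤ y → m' ≤ Aify c m' m'' y) := by
  obtain ⟨hlab, h2cls, hfib, htail⟩ := h
  have hagree : ∀ x, x < m'' → Aify c m' m'' x = c x := fun x hx => if_pos hx
  have hlab' : ∀ x, x < m'' + 3 → Aify c m' m'' x < m'' + 3 := by
    intro x hx
    rcases lt_or_ge x m'' with h3 | h3
    · rw [hagree x h3]
      rcases lt_or_ge x m' with h4 | h4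
      · have := hlab x h4; omega
      · rcases lt_or_ge x (m' + 2) with h5 | h5
        · have : c x = m' := (h2cls x).mpr (by omega)
          omega
        · rw [htail x h5]; omega
    · unfold Aify
      rw [if_neg (by omega), if_pos (by omega)]
      omega
  have hge : ∀ y, m' ≤ y → m' ≤ Aify c m' m'' y := by
    intro y hy
    rcases lt_or_ge y m'' with h3 | h3
    · rw [hagree y h3]
      rcases lt_or_ge y (m' + 2) with h5 | h5
      · have : c y = m' := (h2cls y).mpr (by omega)
        omega
      · rw [htail y h5]; omega
    · unfold Aify
      rw [if_neg (by omega)]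
      split_ifs <;> omega
  refine ⟨hagree, ⟨hlab', ?_, ?_⟩, hge⟩
  · -- fibers of x < m''+3 have encard 5
    intro x hx
    by_cases hcx : Aify c m' m'' x = m'
    · -- the repaired class {m', m'+1, m'', m''+1, m''+2}
      have hset : {y | Aify c m' m'' y = Aify c m' m'' x} =
          insert m' (insert (m' + 1) (Set.Ico m'' (m'' + 3))) := by
        rw [hcx]
        ext y
        simp only [Set.mem_setOf_eq, Set.mem_insert_iff, Set.mem_Ico]
        rcases lt_or_ge y m'' with hy | hy
        · rw [hagree y hy]
          rw [h2cls y]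
          omega
        · unfold Aify
          rw [if_neg (by omega)]
          split_ifs with h6
          · simp only [true_iff]; omega
          · constructor
            · intro h; omega
            · intro h; omega
      rw [hset, Set.encard_insert_of_notMem (by simp; omega),
        Set.encard_insert_of_notMem (by simp; omega), encard_Ico]
      norm_num
    · -- not the repaired class: x < m'' and either old class or tail block
      have hxm : x < m'' := by
        by_contra hc
        exact hcx (by unfold Aify; rw [if_neg (by omega), if_pos (by omega)])
      rw [hagree x hxm] at hcx ⊢
      rcases lt_or_ge x (m' + 2) with h4 | h4
      · -- x < m' (x = m', m'+1 would have c x = m')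
        have hxm' : x < m' := by
          rcases lt_or_ge x m' with h5 | h5
          · exact h5
          · exfalso; exact hcx ((h2cls x).mpr (by omega))
        have hset : {y | Aify c m' m'' y = c x} = {y | c y = c x} := by
          ext y
          simp only [Set.mem_setOf_eq]
          rcases lt_or_ge y m'' with hy | hy
          · rw [hagree y hy]
          · have hcxlt : c x < m' := hlab x hxm'
            unfold Aify
            rw [if_neg (by omega)]
            have hcy : m' + 2 ≤ c y := htail y (by omega) ▸ (by omega)
            split_ifs with h6
            · constructor
              · intro h; omega
              · intro h; omega
            · constructor
              · intro h; omega
              · intro h; omega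
        rw [hset]
        exact hfib x hxm'
      · -- tail block of the B-stage
        set k := (x - (m' + 2)) / 5 with hk
        have hcxval : c x = (m' + 2) + 5 * k := htail x h4
        have hblock : (m' + 2) + 5 * k + 5 ≤ m'' := by omega
        have hset : {y | Aify c m' m'' y = c x} =
            Set.Ico ((m' + 2) + 5 * k) ((m' + 2) + 5 * k + 5) := by
          ext y
          simp only [Set.mem_setOf_eq, Set.mem_Ico, hcxval]
          rcases lt_or_ge y m'' with hy | hy
          · rw [hagree y hy]
            rcases lt_or_ge y m' with h5 | h5
            · have := hlab y h5
              constructor <;> (intro h; omega)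
            · rcases lt_or_ge y (m' + 2) with h6 | h6
              · have : c y = m' := (h2cls y).mpr (by omega)
                constructor <;> (intro h; omega)
              · rw [htail y h6]
                omega
          · unfold Aify
            rw [if_neg (by omega)]
            split_ifs with h6
            · constructor <;> (intro h; omega)
            · constructor <;> (intro h; omega)
        rw [hset, encard_Ico]
        norm_num
  · intro x hx
    unfold Aify
    rw [if_neg (by omega), if_neg (by omega)]

end Stmt10Aux

namespace Stmt10Aux

section diag

variable {Me : ℕ → EqStruct} {A B : EqStruct} {M : Learner}

lemma round (hA : ∀ x, (A.classOf x).encard = 5)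
    (hB : ∃ a, (B.classOf a).encard = 2 ∧ ∀ x, ¬ B.rel x a → (B.classOf x).encard = 5)
    (hMA : InfExLearns Me EqStruct.Isom M A) (hMB : InfExLearns Me EqStruct.Isom M B)
    (c : ℕ → ℕ) (m n₀ : ℕ) (hc : Inv c m) :
    ∃ (cp : ℕ → ℕ) (mp n₁ n₂ e₁ e₂ : ℕ),
      Inv cp mp ∧ m < mp ∧ n₀ < n₁ ∧ n₁ < n₂ ∧ n₂ < mp ∧
      (∀ x, x < m → cp x = c x) ∧
      (∀ y, m ≤ y → cp y = c y ∨ m ≤ cp y) ∧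
      M (seg (pinf cp) n₁) = some e₁ ∧ M (seg (pinf cp) n₂) = some e₂ ∧ e₁ ≠ e₂ := by
  have hisoA : (CS c).Isom A :=
    isom_trans (isom_E5 (CS c) (inv_shape hc)) (isom_symm (isom_E5 A hA))
  obtain ⟨e₁, he₁, N₁, hN₁⟩ := hMA (CS c) hisoA (pinf c) (pinf_informant c)
  set n₁ := max N₁ n₀ + 1 with hn₁
  have hMn₁ : M (seg (pinf c) n₁) = some e₁ := hN₁ n₁ (by omega)
  set m' := m + 5 * (n₁ + 1) with hm'
  obtain ⟨hag1, hB1, hge1⟩ := Bify_spec hc (m' := m') (by omega) (by omega)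
  set c1 := Bify c m' with hc1
  have hisoB : (CS c1).Isom B :=
    isom_trans (isom_FB (CS c1) (binv_shape hB1)) (isom_symm (isom_FB B hB))
  obtain ⟨e₂, he₂, N₂, hN₂⟩ := hMB (CS c1) hisoB (pinf c1) (pinf_informant c1)
  set n₂ := max N₂ n₁ + 1 with hn₂
  have hMn₂ : M (seg (pinf c1) n₂) = some e₂ := hN₂ n₂ (by omega)
  set m'' := (m' + 2) + 5 * (n₂ + 1) with hm''
  obtain ⟨hag2, hI2, hge2⟩ := Aify_spec hB1 (m'' := m'') (by omega) (by omega)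
  set cp := Aify c1 m' m'' with hcp
  refine ⟨cp, m'' + 3, n₁, n₂, e₁, e₂, hI2, by omega, by omega, by omega, by omega,
    ?_, ?_, ?_, ?_, ?_⟩
  · intro x hx
    rw [hag2 x (by omega), hag1 x (by omega)]
  · intro y hy
    rcases lt_or_ge y m' with h3 | h3
    · left; rw [hag2 y (by omega), hag1 y h3]
    · right; exact le_trans (by omega) (hge2 y h3)
  · have : seg (pinf cp) n₁ = seg (pinf c) n₁ := by
      refine seg_congr n₁ fun x hx => ?_
      rw [hag2 x (by omega), hag1 x (by omega)]
    rw [this]; exact hMn₁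
  · have : seg (pinf cp) n₂ = seg (pinf c1) n₂ := by
      refine seg_congr n₂ fun x hx => ?_
      rw [hag2 x (by omega)]
    rw [this]; exact hMn₂
  · intro heq
    subst heq
    have : A.Isom B :=
      isom_trans (isom_symm hisoA) (isom_trans (isom_symm he₁) (isom_trans he₂ hisoB))
    exact not_isom_AB hA hB this

lemma diag_false (hA : ∀ x, (A.classOf x).encard = 5)
    (hB : ∃ a, (B.classOf a).encard = 2 ∧ ∀ x, ¬ B.rel x a → (B.classOf x).encard = 5)
    (hMA : InfExLearns Me EqStruct.Isom M A) (hMB : InfExLearns Me EqStruct.Isom M B) :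
    False := by
  classical
  -- state: colouring, boundary, previous checkpoint
  set St := ((ℕ → ℕ) × ℕ × ℕ) with hSt
  have hstep : ∀ s : St, ∃ t : St × (ℕ × ℕ × ℕ × ℕ), Inv s.1 s.2.1 →
      (Inv t.1.1 t.1.2.1 ∧ s.2.1 < t.1.2.1 ∧
        s.2.2 < t.2.1 ∧ t.2.1 < t.2.2.1 ∧ t.2.2.1 < t.1.2.1 ∧ t.1.2.2 = t.2.2.1 ∧
        (∀ x, x < s.2.1 → t.1.1 x = s.1 x) ∧
        (∀ y, s.2.1 ≤ y → t.1.1 y = s.1 y ∨ s.2.1 ≤ t.1.1 y) ∧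
        M (seg (pinf t.1.1) t.2.1) = some t.2.2.2.1 ∧
        M (seg (pinf t.1.1) t.2.2.1) = some t.2.2.2.2 ∧
        t.2.2.2.1 ≠ t.2.2.2.2) := by
    intro s
    by_cases hs : Inv s.1 s.2.1
    · obtain ⟨cp, mp, n₁, n₂, e₁, e₂, h1, h2, h3, h4, h5, h6, h7, h8, h9, h10⟩ :=
        round hA hB hMA hMB s.1 s.2.1 s.2.2 hs
      exact ⟨((cp, mp, n₂), (n₁, n₂, e₁, e₂)), fun _ =>
        ⟨h1, h2, h3, h4, h5, rfl, h6, h7, h8, h9, h10⟩⟩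
    · exact ⟨((s.1, s.2.1, s.2.2), (0, 0, 0, 0)), fun h => absurd h hs⟩
  choose f hf using hstep
  set s₀ : St := (fun x => 0 + 5 * ((x - 0) / 5), 0, 0) with hs₀
  have hinv₀ : Inv s₀.1 s₀.2.1 :=
    ⟨fun x hx => absurd hx (Nat.not_lt_zero x), fun x hx => absurd hx (Nat.not_lt_zero x),
      fun x _ => rfl⟩
  set sq : ℕ → St := fun j => Nat.rec s₀ (fun _ s => (f s).1) j with hsq
  have hsq_succ : ∀ j, sq (j + 1) = (f (sq j)).1 := fun j => rfl
  -- invariant holds along the sequence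
  have hinv : ∀ j, Inv (sq j).1 (sq j).2.1 := by
    intro j
    induction j with
    | zero => exact hinv₀
    | succ j ih => rw [hsq_succ]; exact ((hf (sq j) ih).1)
  have hprops := fun j => hf (sq j) (hinv j)
  set cs : ℕ → ℕ → ℕ := fun j => (sq j).1 with hcs
  set ms : ℕ → ℕ := fun j => (sq j).2.1 with hms
  set ns : ℕ → ℕ := fun j => (sq j).2.2 with hns
  set d1 : ℕ → ℕ := fun j => (f (sq j)).2.1 with hd1
  set d2 : ℕ → ℕ := fun j => (f (sq j)).2.2.1 with hd2
  set E1 : ℕ → ℕ := fun j => (f (sq j)).2.2.2.1 with hE1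
  set E2 : ℕ → ℕ := fun j => (f (sq j)).2.2.2.2 with hE2
  have hmlt : ∀ j, ms j < ms (j + 1) := fun j => (hprops j).2.1
  have hnlt1 : ∀ j, ns j < d1 j := fun j => (hprops j).2.2.1
  have hnlt2 : ∀ j, d1 j < d2 j := fun j => (hprops j).2.2.2.1
  have hnlt3 : ∀ j, d2 j < ms (j + 1) := fun j => (hprops j).2.2.2.2.1
  have hnsucc : ∀ j, ns (j + 1) = d2 j := fun j => (hprops j).2.2.2.2.2.1
  have hagree : ∀ j x, x < ms j → cs (j + 1) x = cs j x :=
    fun j => (hprops j).2.2.2.2.2.2.1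
  have htailge : ∀ j y, ms j ≤ y → cs (j + 1) y = cs j y ∨ ms j ≤ cs (j + 1) y :=
    fun j => (hprops j).2.2.2.2.2.2.2.1
  have hM1 : ∀ j, M (seg (pinf (cs (j + 1))) (d1 j)) = some (E1 j) :=
    fun j => (hprops j).2.2.2.2.2.2.2.2.1
  have hM2 : ∀ j, M (seg (pinf (cs (j + 1))) (d2 j)) = some (E2 j) :=
    fun j => (hprops j).2.2.2.2.2.2.2.2.2.1
  have hEne : ∀ j, E1 j ≠ E2 j := fun j => (hprops j).2.2.2.2.2.2.2.2.2.2
  -- monotonicity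
  have hmono : ∀ j k, j ≤ k → ms j ≤ ms k := by
    intro j k hjk
    induction k with
    | zero => exact le_of_eq (congrArg ms (Nat.le_zero.mp hjk))
    | succ k ih =>
      rcases Nat.lt_or_ge j (k + 1) with h | h
      · exact le_trans (ih (by omega)) (le_of_lt (hmlt k))
      · exact le_of_eq (congrArg ms (show j = k + 1 by omega))
  have hmge : ∀ j, j ≤ ms j := by
    intro j
    induction j with
    | zero => exact Nat.zero_le _
    | succ j ih => have := hmlt j; omega
  -- stabilization
  have hstab : ∀ j k x, j ≤ k → x < ms j → cs k x = cs j x := by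
    intro j k x hjk hx
    induction k with
    | zero =>
      have : j = 0 := by omega
      rw [this]
    | succ k ih =>
      rcases Nat.lt_or_ge j (k + 1) with h | h
      · have hjx : j ≤ k := by omega
        rw [hagree k x (lt_of_lt_of_le hx (hmono j k hjx))]
        exact ih hjx
      · have : j = k + 1 := by omega
        rw [this]
  set cl : ℕ → ℕ := fun x => cs (x + 1) x with hcl
  have hlim : ∀ j x, x < ms j → cl x = cs j x := by
    intro j x hx
    have hx1 : x < ms (x + 1) := lt_of_lt_of_le (Nat.lt_succ_self x) (hmge (x + 1))
    rcases Nat.le_total j (x + 1) with h | h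
    · show cs (x + 1) x = cs j x
      exact hstab j (x + 1) x h hx
    · show cs (x + 1) x = cs j x
      exact (hstab (x + 1) j x h hx1).symm
  -- tail lower bound
  have htaillb : ∀ j k y, j ≤ k → ms j ≤ y → ms j ≤ cs k y := by
    intro j k y hjk hy
    induction k with
    | zero =>
      have h0 : j = 0 := by omega
      subst h0
      have hv := (hinv 0).2.2 y hy
      simp only [hms, hcs]
      simp only [hms] at hy
      omega
    | succ k ih =>
      rcases Nat.lt_or_ge j (k + 1) with h | h
      · have hjk' : j ≤ k := by omega
        rcases Nat.lt_or_ge y (ms k) with h1 | h1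
        · rw [hagree k y h1]; exact ih hjk'
        · rcases htailge k y h1 with h2 | h2
          · rw [h2]; exact ih hjk'
          · exact le_trans (hmono j k hjk') h2
      · have h0 : j = k + 1 := by omega
        subst h0
        have hv := (hinv (k + 1)).2.2 y hy
        simp only [hms, hcs]
        simp only [hms] at hy
        omega
  -- the limit colouring has all classes of size 5
  have hshape : ∀ x, ((CS cl).classOf x).encard = 5 := by
    intro x
    have hx : x < ms (x + 1) := lt_of_lt_of_le (Nat.lt_succ_self x) (hmge (x + 1))
    set j := x + 1 with hj
    have hclsx : (CS cl).classOf x = {y | cs j y = cs j x} := by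
      ext y
      simp only [EqStruct.classOf, CS, Set.mem_setOf_eq]
      have hclx : cl x = cs j x := hlim j x hx
      rcases Nat.lt_or_ge y (ms j) with hy | hy
      · rw [hclx, hlim j y hy]; exact eq_comm
      · -- y outside: both sides false
        have hyj : j ≤ y + 1 := by
          by_contra hc
          have : ms (y + 1) ≤ ms j := hmono (y + 1) j (by omega)
          have := hmge (y + 1)
          omega
        have h1 : ms j ≤ cl y := by
          rw [hcl]
          exact htaillb j (y + 1) y hyj hy
        have h2 : ms j ≤ cs j y := htaillb j j y le_rfl hy
        have h3 : cs j x < ms j := (hinv j).1 x hx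
        constructor
        · intro h; rw [hclx] at h; omega
        · intro h; omega
    rw [hclsx]
    exact (hinv j).2.1 x hx
  have hisoL : (CS cl).Isom A :=
    isom_trans (isom_E5 (CS cl) hshape) (isom_symm (isom_E5 A hA))
  obtain ⟨e, _, N, hN⟩ := hMA (CS cl) hisoL (pinf cl) (pinf_informant cl)
  -- checkpoints grow
  have hnge : ∀ j, j ≤ ns j := by
    intro j
    induction j with
    | zero => exact Nat.zero_le _
    | succ j ih =>
      rw [hnsucc j]
      have := hnlt1 j; have := hnlt2 j
      omega
  have hd1ge : ∀ j, j ≤ d1 j := fun j => le_trans (hnge j) (le_of_lt (hnlt1 j))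
  -- contradiction at stage N
  have hseg1 : seg (pinf cl) (d1 N) = seg (pinf (cs (N + 1))) (d1 N) := by
    refine seg_congr _ fun x hx => ?_
    exact hlim (N + 1) x (by have := hnlt2 N; have := hnlt3 N; omega)
  have hseg2 : seg (pinf cl) (d2 N) = seg (pinf (cs (N + 1))) (d2 N) := by
    refine seg_congr _ fun x hx => ?_
    exact hlim (N + 1) x (by have := hnlt3 N; omega)
  have h1 := hN (d1 N) (hd1ge N)
  have h2 := hN (d2 N) (le_trans (hd1ge N) (le_of_lt (hnlt2 N)))
  rw [hseg1, hM1 N] at h1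
  rw [hseg2, hM2 N] at h2
  exact hEne N (by rw [← Option.some_inj, h1, h2])

end diag

end Stmt10Aux


/-- InfEx up to isomorphism is strictly contained in InfEx up to
bi-embeddability; `{[5:ω], [5:ω,2:1]}` witnesses the strictness. -/
theorem stmt10 (Me : ℕ → EqStruct) (A B : EqStruct)
    (hA : ∀ x, (A.classOf x).encard = 5)
    (hB : ∃ a, (B.classOf a).encard = 2 ∧ ∀ x, ¬ B.rel x a → (B.classOf x).encard = 5)
    (he : ∃ e, (Me e).Isom A) :
    (∀ 𝔄 : Set EqStruct, (∃ M : Learner, ∀ C ∈ 𝔄, InfExLearns Me EqStruct.Isom M C) →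
      ∃ M : Learner, ∀ C ∈ 𝔄, InfExLearns Me EqStruct.Biembed M C) ∧
    (∃ 𝔄 : Set EqStruct,
      (∃ M : Learner, ∀ C ∈ 𝔄, InfExLearns Me EqStruct.Biembed M C) ∧
      ¬ ∃ M : Learner, ∀ C ∈ 𝔄, InfExLearns Me EqStruct.Isom M C) := by
  open Stmt10Aux in
  constructor
  · rintro 𝔄 ⟨M, hM⟩
    refine ⟨M, fun C hC B' hB' I hI => ?_⟩
    obtain ⟨e, heq, hN⟩ := hM C hC B' hB' I hI
    exact ⟨e, ⟨isom_embeds heq, isom_embeds (isom_symm heq)⟩, hN⟩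
  · obtain ⟨e₀, he₀⟩ := he
    refine ⟨{A, B}, ⟨fun _ => some e₀, ?_⟩, ?_⟩
    · intro C hC B' hB' I hI
      refine ⟨e₀, ?_, 0, fun n _ => rfl⟩
      simp only [Set.mem_insert_iff, Set.mem_singleton_iff] at hC
      rcases hC with rfl | rfl
      · have h1 : (Me e₀).Isom B' := isom_trans he₀ (isom_symm hB')
        exact ⟨isom_embeds h1, isom_embeds (isom_symm h1)⟩
      · have hAE : A.Isom E5 := isom_E5 A hA
        have hBF : C.Isom FB := isom_FB C hB
        constructor
        · exact embeds_trans (isom_embeds he₀) (embeds_trans (isom_embeds hAE)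
            (embeds_trans emb_E5_FB (embeds_trans (isom_embeds (isom_symm hBF))
              (isom_embeds (isom_symm hB')))))
        · exact embeds_trans (isom_embeds hB') (embeds_trans (isom_embeds hBF)
            (embeds_trans emb_FB_E5 (embeds_trans (isom_embeds (isom_symm hAE))
              (isom_embeds (isom_symm he₀)))))
    · rintro ⟨M, hM⟩
      exact diag_false hA hB (hM A (by simp)) (hM B (by simp))
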